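/- Let V and W be finite-dimensional real inner product spaces with dim V ≥ 3, let C ≥ 0 be a real constant, and let B : V × V → W be a symmetric bilinear map satisfying ⟨B(X,Z), B(Y,Z)⟩ = C·⟨X,Y⟩·⟨Z,Z⟩ for all X, Y, Z ∈ V. Then C = 0 and B = 0. -/

import Mathlib

open scoped RealInnerProductSpace

/-- If `dim V ≥ 3` and a symmetric bilinear map `B : V × V → W` satisfies
`⟪B X Z, B Y Z⟫ = C ⟪X, Y⟫ ⟪Z, Z⟫` for all `X Y Z`, then `C = 0` and `B = 0`. -/
theorem stmt0 {V W : Type*} [NormedAddCommGroup V] [InnerProductSpace ℝ V]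
    [NormedAddCommGroup W] [InnerProductSpace ℝ W]
    [FiniteDimensional ℝ V] [FiniteDimensional ℝ W]
    (hdim : 3 ≤ Module.finrank ℝ V) (C : ℝ) (hC : 0 ≤ C)
    (B : V →ₗ[ℝ] V →ₗ[ℝ] W) (hsymm : ∀ X Y : V, B X Y = B Y X)
    (hB : ∀ X Y Z : V, ⟪B X Z, B Y Z⟫ = C * ⟪X, Y⟫ * ⟪Z, Z⟫) :
    C = 0 ∧ B = 0 := by
  -- polarization in Z
  have pol : ∀ X Y Z T : V, ⟪B X Z, B Y T⟫ + ⟪B X T, B Y Z⟫ = 2 * C * ⟪X, Y⟫ * ⟪Z, T⟫ := by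
    intro X Y Z T
    have h1 := hB X Y (Z + T)
    have h2 := hB X Y Z
    have h3 := hB X Y T
    simp only [map_add, inner_add_left, inner_add_right] at h1
    linear_combination h1 - h2 - h3 - C * ⟪X, Y⟫ * (real_inner_comm T Z)
  -- orthonormal vectors
  set b := stdOrthonormalBasis ℝ V with hb
  have hon := (stdOrthonormalBasis ℝ V).orthonormal
  rw [orthonormal_iff_ite] at hon
  let e : Fin 3 → V := fun i => b ⟨i.1, lt_of_lt_of_le i.2 hdim⟩
  have he : ∀ i j : Fin 3, ⟪e i, e j⟫ = if i = j then 1 else 0 := by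
    intro i j
    rw [hon]
    congr 1
    simp [Fin.ext_iff]
  have hnorm : ∀ i, ⟪e i, e i⟫ = 1 := fun i => by rw [he]; simp
  have hdiag : ∀ i, ⟪B (e i) (e i), B (e i) (e i)⟫ = C := by
    intro i
    rw [hB]; rw [hnorm]; ring
  have hoff : ∀ i j : Fin 3, i ≠ j → ⟪B (e i) (e i), B (e j) (e j)⟫ = -C := by
    intro i j hij
    have hp := pol (e i) (e j) (e i) (e j)
    have h2 := hB (e i) (e i) (e j)
    rw [hnorm, hnorm] at h2
    rw [hsymm (e j) (e i)] at hp
    have hz : ⟪e i, e j⟫ = (0 : ℝ) := by simp [he, hij]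
    rw [hz] at hp
    nlinarith [hp, h2]
  have key : (0:ℝ) ≤ -3 * C := by
    have hs := real_inner_self_nonneg (x := B (e 0) (e 0) + B (e 1) (e 1) + B (e 2) (e 2))
    simp only [inner_add_left, inner_add_right] at hs
    have c01 := hoff 0 1 (by decide)
    have c02 := hoff 0 2 (by decide)
    have c12 := hoff 1 2 (by decide)
    have c10 : ⟪B (e 1) (e 1), B (e 0) (e 0)⟫ = -C := by rw [real_inner_comm]; exact c01
    have c20 : ⟪B (e 2) (e 2), B (e 0) (e 0)⟫ = -C := by rw [real_inner_comm]; exact c02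
    have c21 : ⟪B (e 2) (e 2), B (e 1) (e 1)⟫ = -C := by rw [real_inner_comm]; exact c12
    have d0 := hdiag 0; have d1 := hdiag 1; have d2 := hdiag 2
    linarith [hs]
  have hC0 : C = 0 := le_antisymm (by linarith) hC
  refine ⟨hC0, ?_⟩
  ext X Y
  have := hB X X Y
  rw [hC0] at this
  simp only [LinearMap.zero_apply]
  have : ⟪B X Y, B X Y⟫ = 0 := by rw [this]; ring
  exact inner_self_eq_zero.mp this
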